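/- arXiv:1411.1382 — 8 statements merged into one kernel-verified Lean document; each statement's English description precedes it below -/
import Mathlib

section
/- For a finite subset E of K, the integral closure of Int(E, D) = {f ∈ K[X] : f(E) ⊆ D} is Int(E, D') = {f ∈ K[X] : f(E) ⊆ D'}, where D' is the integral closure of D in K. -/
open Polynomial

variable (D : Type*) [CommRing D] [IsDomain D]

noncomputable abbrev K := FractionRing D

/-- The ring `Int(E, D) = {f ∈ K[X] : f(E) ⊆ D}` of polynomials that are
integer-valued on a subset `E ⊆ K`, as a subring of `K[X]`. -/
noncomputable def IntSub (E : Set (K D)) : Subring (Polynomial (K D)) where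
  carrier := {f | ∀ a ∈ E, ∃ d : D, f.eval a = algebraMap D (K D) d}
  zero_mem' := fun a _ => ⟨0, by simp⟩
  one_mem' := fun a _ => ⟨1, by simp⟩
  add_mem' := by
    intro f g hf hg a ha
    obtain ⟨d1, h1⟩ := hf a ha; obtain ⟨d2, h2⟩ := hg a ha
    exact ⟨d1 + d2, by simp [h1, h2]⟩
  mul_mem' := by
    intro f g hf hg a ha
    obtain ⟨d1, h1⟩ := hf a ha; obtain ⟨d2, h2⟩ := hg a ha
    exact ⟨d1 * d2, by simp [h1, h2]⟩
  neg_mem' := by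
    intro f hf a ha
    obtain ⟨d, h⟩ := hf a ha
    exact ⟨-d, by simp [h]⟩

-- evaluation hom into D
noncomputable def evalD (E : Set (K D)) (a : K D) (ha : a ∈ E) : ↥(IntSub D E) →+* D where
  toFun g := (g.2 a ha).choose
  map_one' := by
    apply IsFractionRing.injective D (K D)
    rw [← (((1 : ↥(IntSub D E))).2 a ha).choose_spec]
    simp
  map_mul' g h := by
    apply IsFractionRing.injective D (K D)
    rw [← ((g*h).2 a ha).choose_spec]
    simp [← (g.2 a ha).choose_spec, ← (h.2 a ha).choose_spec]
  map_zero' := by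
    apply IsFractionRing.injective D (K D)
    rw [← (((0 : ↥(IntSub D E))).2 a ha).choose_spec]
    simp
  map_add' g h := by
    apply IsFractionRing.injective D (K D)
    rw [← ((g+h).2 a ha).choose_spec]
    simp [← (g.2 a ha).choose_spec, ← (h.2 a ha).choose_spec]

lemma evalD_spec (E : Set (K D)) (a : K D) (ha : a ∈ E) (g : ↥(IntSub D E)) :
    algebraMap D (K D) (evalD D E a ha g) = (g : Polynomial (K D)).eval a :=
  (g.2 a ha).choose_spec.symm

-- constants hom
noncomputable def constS (E : Set (K D)) : D →+* ↥(IntSub D E) where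
  toFun d := ⟨C (algebraMap D (K D) d), fun a _ => ⟨d, by simp⟩⟩
  map_one' := by ext; simp
  map_mul' d e := by ext; simp
  map_zero' := by ext; simp
  map_add' d e := by ext; simp

/-- For a finite subset `E ⊆ K`, the integral closure of `Int(E, D)` in `K[X]` is
`Int(E, D')`, where `D'` is the integral closure of `D` in `K`. -/
theorem integralClosure_IntSub (E : Set (K D)) (hE : E.Finite) :
    (integralClosure (↥(IntSub D E)) (Polynomial (K D)) : Set (Polynomial (K D))) =
      {f : Polynomial (K D) | ∀ a ∈ E, IsIntegral D (f.eval a)} := by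

  ext f
  simp only [SetLike.mem_coe, Set.mem_setOf_eq, mem_integralClosure_iff]
  constructor
  · rintro ⟨p, hmon, hroot⟩ a ha
    refine ⟨p.map (evalD D E a ha), hmon.map _, ?_⟩
    have h0 := congrArg (evalRingHom a) hroot
    rw [map_zero] at h0
    rw [eval₂_map]
    rw [hom_eval₂] at h0
    rw [← h0]
    congr 1
    ext g
    exact evalD_spec D E a ha g
  · intro hf
    classical
    -- choose monic annihilators
    set P : K D → Polynomial D := fun a =>
      if h : a ∈ E then (hf a h).choose else 1 with hP
    have hPmon : ∀ a, (P a).Monic := by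
      intro a
      by_cases h : a ∈ E
      · simp only [hP, dif_pos h]; exact (hf a h).choose_spec.1
      · simp only [hP, dif_neg h]; exact monic_one
    have hProot : ∀ a ∈ E, aeval (f.eval a) (P a) = 0 := by
      intro a h
      simp only [hP, dif_pos h]
      exact (hf a h).choose_spec.2
    set q : Polynomial D := X * ∏ a ∈ hE.toFinset, P a with hq
    have hqmon : q.Monic := monic_X.mul (monic_prod_of_monic _ _ fun a _ => hPmon a)
    have hqroot : ∀ a ∈ E, aeval (f.eval a) q = 0 := by
      intro a ha
      rw [hq, map_mul, map_prod]
      rw [Finset.prod_eq_zero (hE.mem_toFinset.mpr ha) (hProot a ha), mul_zero]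
    set c : Polynomial (K D) := (q.map (algebraMap D (K D))).comp f with hc
    have hcmem : c ∈ IntSub D E := by
      intro a ha
      refine ⟨0, ?_⟩
      rw [hc, eval_comp, eval_map, ← aeval_def, hqroot a ha, map_zero]
    refine ⟨q.map (constS D E) - C ⟨c, hcmem⟩, ?_, ?_⟩
    · have hdeg : (C (⟨c, hcmem⟩ : ↥(IntSub D E))).degree < (q.map (constS D E)).degree := by
        rw [hqmon.degree_map (constS D E)]
        refine lt_of_le_of_lt (degree_C_le) ?_
        rw [hq]
        have h1 : (0:WithBot ℕ) < degree (X : Polynomial D) := by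
          rw [degree_X]; exact zero_lt_one
        calc (0:WithBot ℕ) < degree (X : Polynomial D) := h1
          _ ≤ degree (X * ∏ a ∈ hE.toFinset, P a) := by
              rw [degree_mul]
              have : (0:WithBot ℕ) ≤ degree (∏ a ∈ hE.toFinset, P a) :=
                zero_le_degree_iff.mpr (monic_prod_of_monic _ _ fun a _ => hPmon a).ne_zero
              exact le_add_of_nonneg_right this
      have := (hqmon.map (constS D E)).add_of_left (q := -C (⟨c, hcmem⟩ : ↥(IntSub D E)))
        (by rwa [degree_neg])
      simpa [sub_eq_add_neg] using this
    · rw [← aeval_def, map_sub, aeval_C]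
      have h1 : aeval f (q.map (constS D E)) = c := by
        rw [aeval_def, eval₂_map, hc, comp, eval₂_map]
        apply eval₂_congr _ rfl rfl
        ext d
        rfl
      rw [h1]
      have h2 : algebraMap (↥(IntSub D E)) (Polynomial (K D)) ⟨c, hcmem⟩ = c := rfl
      rw [h2, sub_self]
end

section
/- Every polynomial f in Int(E, D') satisfies a monic polynomial equation with coefficients in Int(E, D); specifically, the product over a ∈ E of monic polynomials m_{f(a)} ∈ D[X] with m_{f(a)}(f(a)) = 0 yields a monic m ∈ D[X] with m(f(X)) ∈ Int(E, D). -/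
open Polynomial

variable (D : Type*) [CommRing D] [IsDomain D]

/-- Every `f ∈ Int(E, D')` (with `D'` the integral closure of `D` in `K`) satisfies a monic
equation over `Int(E, D)`: there is a monic `m ∈ D[X]` vanishing at every value `f(a)`,
`a ∈ E`, and in particular `m(f(X)) ∈ Int(E, D)`. -/
theorem exists_monic_of_integral_valued (E : Set (K D)) (hE : E.Finite)
    (f : Polynomial (K D)) (hf : ∀ a ∈ E, IsIntegral D (f.eval a)) :
    ∃ m : D[X], m.Monic ∧ (∀ a ∈ E, (m.map (algebraMap D (K D))).eval (f.eval a) = 0) ∧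
      (m.map (algebraMap D (K D))).comp f ∈ IntSub D E := by
  classical
  choose p hpmonic hproot using fun (a : E) => hf a.1 a.2
  haveI : Fintype E := hE.fintype
  have key : ∀ (a : E), Polynomial.eval (f.eval a.1) ((p a).map (algebraMap D (K D))) = 0 := by
    intro a
    rw [Polynomial.eval_map]
    exact hproot a
  refine ⟨∏ a : E, p a, monic_prod_of_monic _ _ fun a _ => hpmonic a, ?_, ?_⟩
  · intro a ha
    rw [Polynomial.map_prod, Polynomial.eval_prod]
    exact Finset.prod_eq_zero (Finset.mem_univ (⟨a, ha⟩ : E)) (key ⟨a, ha⟩)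
  · intro a ha
    refine ⟨0, ?_⟩
    rw [Polynomial.eval_comp, Polynomial.map_prod, Polynomial.eval_prod, map_zero]
    exact Finset.prod_eq_zero (Finset.mem_univ (⟨a, ha⟩ : E)) (key ⟨a, ha⟩)
end

section
/- Let f ∈ K[X] and let r ∈ K[X] be the remainder of division of f by the monic polynomial p ∈ D[X] of degree n with roots α_1,...,α_n (with multiplicity) in a splitting field F. Then for all 0 ≤ k < n, Φ^k(f)(α_1,...,α_{k+1}) = Φ^k(r)(α_1,...,α_{k+1}), and r(X) = f(α_1) + Φ^1(f)(α_1,α_2)(X-α_1) + ... + Φ^m(f)(α_1,...,α_{m+1})·∏_{i=1}^m (X-α_i), where m = deg r. -/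
open Polynomial Finset

/-- The `k`-th divided difference `Φ^k(f)(a 0, …, a k)` of a polynomial `f`, defined (in a way
valid also for repeated nodes) as the coefficient of `X^k` in the remainder of the division of
`f` by `∏ i, (X - a i)`; for pairwise distinct nodes this agrees with the recursive definition
`Φ^k(f)(X_0,…,X_k) = (Φ^{k-1}(f)(X_0,…,X_{k-1}) - Φ^{k-1}(f)(X_0,…,X_{k-2},X_k))/(X_{k-1}-X_k)`. -/
noncomputable def divDiff {L : Type*} [Field L] (k : ℕ) (f : Polynomial L)
    (a : Fin (k + 1) → L) : L :=
  (f %ₘ ∏ i, (X - C (a i))).coeff k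

section aux
variable {L : Type*} [Field L] (α : ℕ → L)

private lemma qmon (k : ℕ) : (∏ i ∈ Finset.range k, (X - C (α i))).Monic :=
  monic_prod_of_monic _ _ fun i _ => monic_X_sub_C (α i)

private lemma qnatdeg (k : ℕ) : (∏ i ∈ Finset.range k, (X - C (α i))).natDegree = k := by
  rw [natDegree_prod_of_monic _ _ fun i _ => monic_X_sub_C (α i)]
  simp [natDegree_X_sub_C]

private lemma qdeg (k : ℕ) : (∏ i ∈ Finset.range k, (X - C (α i))).degree = (k : WithBot ℕ) := by
  rw [degree_eq_natDegree (qmon α k).ne_zero, qnatdeg]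

private lemma newton_expand :
    ∀ (m : ℕ) (s : Polynomial L), s.natDegree ≤ m →
    s = ∑ k ∈ Finset.range (m + 1),
      C ((s %ₘ ∏ i ∈ Finset.range (k + 1), (X - C (α i))).coeff k) *
        ∏ i ∈ Finset.range k, (X - C (α i)) := by
  intro m
  induction m with
  | zero =>
    intro s hs
    have hself : s %ₘ ∏ i ∈ Finset.range 1, (X - C (α i)) = s := by
      rw [modByMonic_eq_self_iff (qmon α 1), qdeg α 1]
      calc s.degree ≤ ((0 : ℕ) : WithBot ℕ) := degree_le_natDegree.trans (by exact_mod_cast hs)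
        _ < ((1 : ℕ) : WithBot ℕ) := by exact_mod_cast Nat.zero_lt_one
    rw [Finset.sum_range_one, hself, Finset.range_zero, Finset.prod_empty, mul_one]
    exact (eq_C_of_natDegree_le_zero hs)
  | succ m ih =>
    intro s hs
    set c := s.coeff (m + 1) with hc
    set s' := s - C c * ∏ i ∈ Finset.range (m + 1), (X - C (α i)) with hs'
    have hcoefftop : (∏ i ∈ Finset.range (m + 1), (X - C (α i))).coeff (m + 1) = 1 := by
      have := (qmon α (m + 1)).coeff_natDegree
      rwa [qnatdeg] at this
    have hds' : s'.natDegree ≤ m := by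
      rw [natDegree_le_iff_coeff_eq_zero]
      intro N hN
      rcases eq_or_lt_of_le (Nat.succ_le_of_lt hN) with h | h
      · simp only [hs', coeff_sub, coeff_C_mul, ← h]
        rw [hcoefftop, mul_one, ← hc, sub_self]
      · simp only [hs', coeff_sub, coeff_C_mul]
        rw [coeff_eq_zero_of_natDegree_lt (lt_of_le_of_lt hs h),
          coeff_eq_zero_of_natDegree_lt (by rw [qnatdeg]; exact h)]
        ring
    have key : ∀ k, k ≤ m →
        s' %ₘ ∏ i ∈ Finset.range (k + 1), (X - C (α i)) =
        s %ₘ ∏ i ∈ Finset.range (k + 1), (X - C (α i)) := by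
      intro k hk
      rw [hs', sub_eq_add_neg, add_modByMonic,
        (modByMonic_eq_zero_iff_dvd (qmon α (k+1))).2
          (dvd_neg.2 (Dvd.dvd.mul_left
            (Finset.prod_dvd_prod_of_subset _ _ _
              (Finset.range_subset_range.2 (by omega))) _)), add_zero]
    have htop : s %ₘ ∏ i ∈ Finset.range (m + 1 + 1), (X - C (α i)) = s := by
      rw [modByMonic_eq_self_iff (qmon α (m+2)), qdeg α (m+2)]
      calc s.degree ≤ ((m + 1 : ℕ) : WithBot ℕ) := degree_le_natDegree.trans (by exact_mod_cast hs)
        _ < ((m + 2 : ℕ) : WithBot ℕ) := by exact_mod_cast Nat.lt_succ_self _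
    rw [Finset.sum_range_succ]
    have hsum : ∑ k ∈ Finset.range (m + 1),
        C ((s %ₘ ∏ i ∈ Finset.range (k + 1), (X - C (α i))).coeff k) *
          ∏ i ∈ Finset.range k, (X - C (α i)) = s' := by
      rw [ih s' hds']
      exact (Finset.sum_congr rfl fun k hk => by
        rw [key k (Nat.lt_succ_iff.mp (Finset.mem_range.mp hk))]).symm
    rw [hsum, htop, ← hc, hs']
    ring
end aux

/-- Let `r` be the remainder of the division of `f ∈ K[X]` by the monic `p ∈ D[X]` of degree
`n`, with roots `α 0, …, α (n-1)` (with multiplicity) in a splitting field `L`. Then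
`Φ^k(f)(α 0,…,α k) = Φ^k(r)(α 0,…,α k)` for all `0 ≤ k < n`, and `r` has the Newton expansion
`r = Σ_{k=0}^{m} Φ^k(f)(α 0,…,α k) ∏_{i<k} (X - α i)`, where `m = deg r`. -/
theorem divDiff_eq_divDiff_modByMonic_and_newton (D : Type*) [CommRing D] [IsDomain D]
    (L : Type*) [Field L] [Algebra D L] [Algebra (FractionRing D) L]
    [IsScalarTower D (FractionRing D) L]
    (p : D[X]) (hp : p.Monic) (n : ℕ) (hdeg : p.natDegree = n) (hn : 0 < n) (α : ℕ → L)
    (hsplit : p.map (algebraMap D L) = ∏ i ∈ Finset.range n, (X - C (α i)))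
    (f : Polynomial (FractionRing D))
    (r : Polynomial (FractionRing D))
    (hr : r = f %ₘ p.map (algebraMap D (FractionRing D))) :
    (∀ k < n,
        divDiff k (f.map (algebraMap (FractionRing D) L)) (fun i : Fin (k + 1) => α i.1) =
        divDiff k (r.map (algebraMap (FractionRing D) L)) (fun i : Fin (k + 1) => α i.1)) ∧
      (r ≠ 0 →
        r.map (algebraMap (FractionRing D) L) =
          ∑ k ∈ Finset.range (r.natDegree + 1),
            C (divDiff k (f.map (algebraMap (FractionRing D) L))
                (fun i : Fin (k + 1) => α i.1)) *
              ∏ i ∈ Finset.range k, (X - C (α i))) := by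
  have hdd : ∀ (k : ℕ) (s : L[X]), divDiff k s (fun i : Fin (k + 1) => α i.1) =
      (s %ₘ ∏ i ∈ Finset.range (k + 1), (X - C (α i))).coeff k := by
    intro k s
    unfold divDiff
    rw [Fin.prod_univ_eq_prod_range (fun i => X - C (α i)) (k + 1)]
  have hpK : (p.map (algebraMap D (FractionRing D))).Monic := hp.map _
  have hmapmap : (p.map (algebraMap D (FractionRing D))).map (algebraMap (FractionRing D) L)
      = p.map (algebraMap D L) := by
    rw [Polynomial.map_map, ← IsScalarTower.algebraMap_eq]
  have part1 : ∀ k < n,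
      (f.map (algebraMap (FractionRing D) L)) %ₘ ∏ i ∈ Finset.range (k + 1), (X - C (α i)) =
      (r.map (algebraMap (FractionRing D) L)) %ₘ ∏ i ∈ Finset.range (k + 1), (X - C (α i)) := by
    intro k hk
    have hf : f = r + (p.map (algebraMap D (FractionRing D)))
        * (f /ₘ (p.map (algebraMap D (FractionRing D)))) := by
      rw [hr]; exact (modByMonic_add_div f _).symm
    rw [hf, Polynomial.map_add, Polynomial.map_mul, hmapmap, add_modByMonic,
      (modByMonic_eq_zero_iff_dvd (qmon α (k + 1))).2
        (Dvd.dvd.mul_right (hsplit ▸ Finset.prod_dvd_prod_of_subset _ _ _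
          (Finset.range_subset_range.2 hk)) _), add_zero]
  refine ⟨fun k hk => by rw [hdd, hdd, part1 k hk], fun hr0 => ?_⟩
  have hmlt : r.natDegree < n := by
    have h1 : r.degree < (p.map (algebraMap D (FractionRing D))).degree := by
      rw [hr]; exact degree_modByMonic_lt f hpK
    have h2 : (p.map (algebraMap D (FractionRing D))).degree = (n : WithBot ℕ) := by
      rw [degree_eq_natDegree hpK.ne_zero, hp.natDegree_map _, hdeg]
    rw [degree_eq_natDegree hr0, h2] at h1
    exact_mod_cast h1
  calc r.map (algebraMap (FractionRing D) L)
      = ∑ k ∈ Finset.range (r.natDegree + 1),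
          C (((r.map (algebraMap (FractionRing D) L)) %ₘ
              ∏ i ∈ Finset.range (k + 1), (X - C (α i))).coeff k) *
            ∏ i ∈ Finset.range k, (X - C (α i)) :=
        newton_expand α r.natDegree _ natDegree_map_le
    _ = _ := Finset.sum_congr rfl fun k hk => by
        rw [hdd, part1 k (lt_of_lt_of_le (Finset.mem_range.mp hk) hmlt)]
end

section
/- Let D be integrally closed, p ∈ D[X] non-constant of degree n with multi-set of roots Ω_p in an algebraic closure of K, and let f ∈ K[X] be such that f(α) is integral over D for every α ∈ Ω_p. Then P(X) = ∏_{α ∈ Ω_p} (X - f(α)) has coefficients in D, and p(X) divides P(f(X)) in K[X]. -/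
open Polynomial

section aux

variable {K L : Type*} [Field K] [Field L] [Algebra K L]

lemma aux_symm_eval_mem_bot {n : ℕ} (β : Fin n → L)
    (hes : ∀ m, m ≤ n → MvPolynomial.aeval β (MvPolynomial.esymm (Fin n) K m)
      ∈ (⊥ : Subalgebra K L))
    (S : MvPolynomial (Fin n) K) (hS : S.IsSymmetric) :
    MvPolynomial.aeval β S ∈ (⊥ : Subalgebra K L) := by
  obtain ⟨q, hq⟩ := MvPolynomial.esymmAlgHom_surjective (R := K) (σ := Fin n) (n := n)
    (by simp) ⟨S, (MvPolynomial.mem_symmetricSubalgebra S).mpr hS⟩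
  have hSq : S = MvPolynomial.aeval
      (fun i : Fin n => MvPolynomial.esymm (Fin n) K (i + 1)) q := by
    have := congrArg Subtype.val hq
    rw [MvPolynomial.esymmAlgHom_apply] at this
    exact this.symm
  rw [hSq, MvPolynomial.comp_aeval_apply]
  set u : Fin n → (⊥ : Subalgebra K L) := fun i =>
    ⟨MvPolynomial.aeval β (MvPolynomial.esymm (Fin n) K (i + 1)),
      hes (i + 1) i.2⟩ with hu
  have : (fun i : Fin n => MvPolynomial.aeval β (MvPolynomial.esymm (Fin n) K (i + 1)))
      = fun i => (u i : L) := rfl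
  rw [this, Subalgebra.mvPolynomial_aeval_coe]
  exact (MvPolynomial.aeval u q).2

lemma aux_subst_symmetric {n : ℕ} (f : K[X]) (E : MvPolynomial (Fin n) K)
    (hE : E.IsSymmetric) :
    (MvPolynomial.aeval (fun i : Fin n =>
      Polynomial.aeval (MvPolynomial.X i : MvPolynomial (Fin n) K) f) E).IsSymmetric := by
  intro e
  have h1 : MvPolynomial.rename e
      (MvPolynomial.aeval (fun i : Fin n =>
        Polynomial.aeval (MvPolynomial.X i : MvPolynomial (Fin n) K) f) E)
      = MvPolynomial.aeval
        (fun i : Fin n => MvPolynomial.rename e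
          (Polynomial.aeval (MvPolynomial.X i : MvPolynomial (Fin n) K) f)) E :=
    MvPolynomial.comp_aeval_apply _ _ _
  rw [h1]
  have h2 : (fun i : Fin n => MvPolynomial.rename e
        (Polynomial.aeval (MvPolynomial.X i : MvPolynomial (Fin n) K) f))
      = fun i : Fin n => Polynomial.aeval (MvPolynomial.X (e i) : MvPolynomial (Fin n) K) f := by
    funext i
    rw [← Polynomial.aeval_algHom_apply, MvPolynomial.rename_X]
  rw [h2]
  have h3 : (fun i : Fin n => Polynomial.aeval (MvPolynomial.X (e i) : MvPolynomial (Fin n) K) f)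
      = (fun i : Fin n => Polynomial.aeval (MvPolynomial.X i : MvPolynomial (Fin n) K) f) ∘ e :=
    rfl
  rw [h3, ← MvPolynomial.aeval_rename, hE e]

lemma aux_subst_eval {n : ℕ} (f : K[X]) (E : MvPolynomial (Fin n) K) (β : Fin n → L) :
    MvPolynomial.aeval β
      (MvPolynomial.aeval (fun i : Fin n =>
        Polynomial.aeval (MvPolynomial.X i : MvPolynomial (Fin n) K) f) E)
      = MvPolynomial.aeval (fun i : Fin n => Polynomial.aeval (β i) f) E := by
  rw [MvPolynomial.comp_aeval_apply]
  have : (fun i : Fin n => MvPolynomial.aeval β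
      (Polynomial.aeval (MvPolynomial.X i : MvPolynomial (Fin n) K) f))
      = fun i : Fin n => Polynomial.aeval (β i) f := by
    funext i
    rw [← Polynomial.aeval_algHom_apply, MvPolynomial.aeval_X]
  rw [this]

end aux

/-- Let `D` be integrally closed with quotient field `K`, `p ∈ D[X]` non-constant of degree `n`
with roots `α 0, …, α (n-1)` (with multiplicity) in a field extension `L` of `K`, and let
`f ∈ K[X]` take values integral over `D` at every root of `p`. Then
`P(X) = ∏_{i} (X - f(α i))` has coefficients in `D`, and `p` divides `P(f(X))` in `K[X]`. -/
theorem prod_sub_values_integral (D : Type*) [CommRing D] [IsDomain D] [IsIntegrallyClosed D]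
    (L : Type*) [Field L] [Algebra D L] [Algebra (FractionRing D) L]
    [IsScalarTower D (FractionRing D) L]
    (p : D[X]) (n : ℕ) (hdeg : p.natDegree = n) (hn : 0 < n) (α : ℕ → L)
    (hsplit : p.map (algebraMap D L) =
      C (algebraMap D L p.leadingCoeff) * ∏ i ∈ Finset.range n, (X - C (α i)))
    (f : Polynomial (FractionRing D))
    (hf : ∀ i < n, IsIntegral D ((f.map (algebraMap (FractionRing D) L)).eval (α i))) :
    ∃ P₀ : D[X],
      P₀.map (algebraMap D L) =
        ∏ i ∈ Finset.range n, (X - C ((f.map (algebraMap (FractionRing D) L)).eval (α i))) ∧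
      p.map (algebraMap D (FractionRing D)) ∣
        (P₀.map (algebraMap D (FractionRing D))).comp f := by
  classical
  set K := FractionRing D
  set g : L[X] := f.map (algebraMap K L) with hg
  set t : ℕ → L := fun i => g.eval (α i) with ht
  set Q : L[X] := ∏ i ∈ Finset.range n, (X - C (t i)) with hQ
  -- injectivity facts
  have hDK : Function.Injective (algebraMap D K) := IsFractionRing.injective D K
  have hKL : Function.Injective (algebraMap K L) := (algebraMap K L).injective
  have hDL : Function.Injective (algebraMap D L) := by
    rw [IsScalarTower.algebraMap_eq D K L]; exact hKL.comp hDK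
  have hp0 : p ≠ 0 := by
    intro h; rw [h] at hdeg; simp at hdeg; omega
  have hlc : p.leadingCoeff ≠ 0 := leadingCoeff_ne_zero.mpr hp0
  have hc0 : algebraMap D L p.leadingCoeff ≠ 0 := fun h => hlc (hDL (by simpa using h))
  have hcK0 : algebraMap D K p.leadingCoeff ≠ 0 := fun h => hlc (hDK (by simpa using h))
  -- the product of (X - α i) as a polynomial with coefficients in K
  set β : Fin n → L := fun i => α i with hβ
  set τ : Fin n → L := fun i => t i with hτ
  set pA : K[X] := C (algebraMap D K p.leadingCoeff)⁻¹ * p.map (algebraMap D K) with hpA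
  have hprodα : (∏ i ∈ Finset.range n, (X - C (α i))) = pA.map (algebraMap K L) := by
    rw [hpA, Polynomial.map_mul, Polynomial.map_C, map_inv₀, Polynomial.map_map,
      ← IsScalarTower.algebraMap_eq, hsplit, ← mul_assoc, ← C_mul,
      ← IsScalarTower.algebraMap_apply D K L, inv_mul_cancel₀ hc0, C_1, one_mul]
  -- multiset versions
  have hmsα : (∏ i ∈ Finset.range n, (X - C (α i)))
      = ((Finset.univ.val.map β).map fun r => (X : L[X]) - C r).prod := by
    rw [Multiset.map_map, ← Finset.prod_eq_multiset_prod, ← Fin.prod_univ_eq_prod_range]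
    rfl
  have hmsτ : Q = ((Finset.univ.val.map τ).map fun r => (X : L[X]) - C r).prod := by
    rw [Multiset.map_map, ← Finset.prod_eq_multiset_prod, hQ, ← Fin.prod_univ_eq_prod_range]
    rfl
  have hcardα : Multiset.card (Finset.univ.val.map β) = n := by simp
  have hcardτ : Multiset.card (Finset.univ.val.map τ) = n := by simp
  -- elementary symmetric functions of the α's lie in K
  have hes : ∀ m, m ≤ n → MvPolynomial.aeval β (MvPolynomial.esymm (Fin n) K m)
      ∈ (⊥ : Subalgebra K L) := by
    intro m hm
    rw [MvPolynomial.aeval_esymm_eq_multiset_esymm]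
    have hcoeff := Multiset.prod_X_sub_C_coeff (Finset.univ.val.map β)
      (k := n - m) (by rw [hcardα]; omega)
    rw [hcardα, Nat.sub_sub_self hm] at hcoeff
    have hesymm : (Finset.univ.val.map β).esymm m
        = (-1 : L) ^ m * (pA.map (algebraMap K L)).coeff (n - m) := by
      rw [← hprodα, hmsα, hcoeff, ← mul_assoc, ← mul_pow]
      simp
    rw [hesymm, Polynomial.coeff_map]
    exact Subalgebra.mul_mem _ (Subalgebra.pow_mem _ (Subalgebra.neg_mem _
      (Subalgebra.one_mem _)) m) (Algebra.mem_bot.mpr ⟨_, rfl⟩)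
  -- τ i = aeval (β i) f
  have hτa : τ = fun i : Fin n => Polynomial.aeval (β i) f := by
    funext i
    rw [hτ]; simp only [ht, hg, hβ]
    rw [Polynomial.aeval_def, Polynomial.eval_map]
  -- coefficients of Q lie in (the image of) K
  have hQK : ∀ k, Q.coeff k ∈ Set.range (algebraMap K L) := by
    intro k
    by_cases hk : k ≤ n
    · have hcoeff := Multiset.prod_X_sub_C_coeff (Finset.univ.val.map τ)
        (k := k) (by rw [hcardτ]; omega)
      rw [hcardτ] at hcoeff
      rw [hmsτ, hcoeff]
      have hesymm : (Finset.univ.val.map τ).esymm (n - k)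
          = MvPolynomial.aeval τ (MvPolynomial.esymm (Fin n) K (n - k)) :=
        (MvPolynomial.aeval_esymm_eq_multiset_esymm (σ := Fin n) (R := K) (n - k) τ).symm
      rw [hesymm, hτa, ← aux_subst_eval f (MvPolynomial.esymm (Fin n) K (n - k)) β]
      have hmem := aux_symm_eval_mem_bot β hes _
        (aux_subst_symmetric f (MvPolynomial.esymm (Fin n) K (n - k))
          (MvPolynomial.esymm_isSymmetric _ _ _))
      rw [Algebra.mem_bot] at hmem
      obtain ⟨y, hy⟩ := hmem
      exact ⟨(-1) ^ (n - k) * y, by rw [map_mul, hy]; simp⟩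
    · have hQdeg : Q.natDegree = n := by
        rw [hQ]
        rw [Polynomial.natDegree_prod _ _ (fun i _ => X_sub_C_ne_zero (t i))]
        simp
      have : Q.coeff k = 0 := coeff_eq_zero_of_natDegree_lt (by omega)
      rw [this]
      exact ⟨0, by simp⟩
  -- coefficients of Q are integral over D
  have hQint : ∀ k, IsIntegral D (Q.coeff k) := by
    have hQlift : Q ∈ Polynomial.lifts (algebraMap (integralClosure D L) L) := by
      rw [hQ]
      apply Subsemiring.prod_mem
      intro i hi
      rw [Polynomial.mem_lifts _]
      exact ⟨X - C ⟨t i, hf i (Finset.mem_range.mp hi)⟩, by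
        rw [Polynomial.map_sub, Polynomial.map_X, Polynomial.map_C]; rfl⟩
    obtain ⟨Q₀, hQ₀⟩ := (Polynomial.mem_lifts _).mp hQlift
    intro k
    rw [← hQ₀, Polynomial.coeff_map]
    exact (Q₀.coeff k).2
  -- coefficients of Q lie in the image of D
  have hQD : ∀ k, Q.coeff k ∈ Set.range (algebraMap D L) := by
    intro k
    obtain ⟨x, hx⟩ := hQK k
    have hxint : IsIntegral D x := by
      refine IsIntegral.tower_bot hKL ?_
      rw [hx]; exact hQint k
    obtain ⟨y, hy⟩ := IsIntegrallyClosed.isIntegral_iff.mp hxint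
    exact ⟨y, by rw [IsScalarTower.algebraMap_apply D K L, hy, hx]⟩
  -- obtain P₀
  have hQlifts : Q ∈ Polynomial.lifts (algebraMap D L) :=
    (Polynomial.lifts_iff_coeff_lifts Q).mpr hQD
  obtain ⟨P₀, hP₀⟩ := (Polynomial.mem_lifts _).mp hQlifts
  refine ⟨P₀, hP₀, ?_⟩
  -- divisibility
  rw [← Polynomial.map_dvd_map' (algebraMap K L), Polynomial.map_comp,
    Polynomial.map_map, ← IsScalarTower.algebraMap_eq, Polynomial.map_map,
    ← IsScalarTower.algebraMap_eq, hP₀, hsplit]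
  have hdvd : (∏ i ∈ Finset.range n, ((X : L[X]) - C (α i))) ∣ Q.comp g := by
    rw [hQ, Polynomial.prod_comp]
    refine Finset.prod_dvd_prod_of_dvd _ _ fun i _ => ?_
    rw [Polynomial.sub_comp, Polynomial.X_comp, Polynomial.C_comp]
    rw [Polynomial.dvd_iff_isRoot]
    simp [Polynomial.IsRoot, ht]
  exact (IsUnit.mul_left_dvd (isUnit_C.mpr (isUnit_iff_ne_zero.mpr hc0))).mpr hdvd
end

section
/- For a monic non-constant polynomial p ∈ D[X] with multi-set of roots Ω_p in an algebraic closure of K, the integral closure of the pullback D(p) = D[X] + p·K[X] in K[X] is the ring Int_K(Ω_p, D̄) = {f ∈ K[X] : f(α) is integral over D for all α ∈ Ω_p}. -/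
open Polynomial

theorem aux_isIntegralElem {B A : Type*} [CommRing B] [CommRing A] [Nontrivial A]
    (ρ : B →+* A) (x : A) (P : A[X]) (hP : P.Monic)
    (hc : ∀ i, P.coeff i ∈ Set.range ρ) (hx : P.eval x = 0) : ρ.IsIntegralElem x := by
  obtain ⟨Q, hQmap, -, hQm⟩ :=
    lifts_and_degree_eq_and_monic ((lifts_iff_coeff_lifts P).2 hc) hP
  exact ⟨Q, hQm, by rw [← eval_map, hQmap, hx]⟩

variable (D : Type*) [CommRing D] [IsDomain D]

/-- The pullback `D(p) = D[X] + p·K[X]` as a subring of `K[X]`. -/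
noncomputable def Dp (p : D[X]) : Subring (Polynomial (K D)) where
  carrier := {f | ∃ r : D[X], ∃ q : Polynomial (K D),
    f = r.map (algebraMap D (K D)) + p.map (algebraMap D (K D)) * q}
  zero_mem' := ⟨0, 0, by simp⟩
  one_mem' := ⟨1, 0, by simp⟩
  add_mem' := by
    rintro a b ⟨r1, q1, rfl⟩ ⟨r2, q2, rfl⟩
    exact ⟨r1 + r2, q1 + q2, by push_cast [Polynomial.map_add]; ring⟩
  mul_mem' := by
    rintro a b ⟨r1, q1, rfl⟩ ⟨r2, q2, rfl⟩
    exact ⟨r1 * r2, r1.map (algebraMap D (K D)) * q2 + q1 * (r2.map (algebraMap D (K D)))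
      + p.map (algebraMap D (K D)) * q1 * q2, by push_cast [Polynomial.map_mul]; ring⟩
  neg_mem' := by
    rintro a ⟨r, q, rfl⟩
    exact ⟨-r, -q, by push_cast [Polynomial.map_neg]; ring⟩

set_option maxHeartbeats 2000000 in
set_option synthInstance.maxHeartbeats 200000 in
/-- For monic non-constant `p ∈ D[X]` with multiset of roots `Ω_p` in an algebraic closure of
`K`, the integral closure of the pullback `D(p) = D[X] + p·K[X]` in `K[X]` is the ring
`Int_K(Ω_p, D̄) = {f ∈ K[X] : f(α)` is integral over `D` for every root `α` of `p}`. -/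
theorem integralClosure_Dp (L : Type*) [Field L] [Algebra D L] [Algebra (K D) L]
    [IsScalarTower D (K D) L] [IsAlgClosed L] [Algebra.IsAlgebraic (K D) L]
    (p : D[X]) (hp : p.Monic) (hdeg : 0 < p.natDegree) :
    (integralClosure (↥(Dp D p)) (Polynomial (K D)) : Set (Polynomial (K D))) =
      {f : Polynomial (K D) | ∀ x : L, (p.map (algebraMap D L)).eval x = 0 →
        IsIntegral D ((f.map (algebraMap (K D) L)).eval x)} := by
  have halg : algebraMap D L = (algebraMap (K D) L).comp (algebraMap D (K D)) :=
    IsScalarTower.algebraMap_eq D (K D) L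
  ext f
  simp only [SetLike.mem_coe, Set.mem_setOf_eq, mem_integralClosure_iff]
  constructor
  · rintro ⟨P, hPm, hPe⟩ x hx
    have hxint : IsIntegral D x := ⟨p, hp, by rwa [← eval_map]⟩
    let ev : Polynomial (K D) →+* L := eval₂RingHom (algebraMap (K D) L) x
    have hevf : ev f = (f.map (algebraMap (K D) L)).eval x := (eval_map _ _).symm
    have hev : ∀ r : Dp D p, ev (r : Polynomial (K D)) ∈ integralClosure D L := by
      rintro ⟨r, r₀, q, rfl⟩
      have h1 : ev (r₀.map (algebraMap D (K D))) = aeval x r₀ := by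
        simp only [ev, coe_eval₂RingHom, eval₂_map, ← halg, aeval_def]
      have h2 : ev (p.map (algebraMap D (K D))) = 0 := by
        simp only [ev, coe_eval₂RingHom, eval₂_map, ← halg]
        rwa [← eval_map]
      simp only [map_add, map_mul, h1, h2, zero_mul, add_zero]
      refine Algebra.adjoin_le ?_ (aeval_mem_adjoin_singleton D x)
      rwa [Set.singleton_subset_iff, SetLike.mem_coe, mem_integralClosure_iff]
    have h1 : IsIntegral (integralClosure D L) (ev f) := by
      apply aux_isIntegralElem (algebraMap (integralClosure D L) L) _
        (P.map (ev.comp (algebraMap (Dp D p) (Polynomial (K D))))) (hPm.map _)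
      · intro i
        rw [coeff_map]
        exact ⟨⟨_, hev _⟩, rfl⟩
      · rw [eval_map, ← hom_eval₂, hPe, map_zero]
    rw [← hevf]
    exact isIntegral_trans (ev f) h1
  · intro hf
    let j : Polynomial (K D) →+* Polynomial L := mapRingHom (algebraMap (K D) L)
    have hjinj : Function.Injective j :=
      map_injective _ (algebraMap (K D) L).injective
    set S : Subring (Polynomial L) := (Dp D p).map j with hSdef
    set p' : Polynomial L := p.map (algebraMap D L) with hp'def
    have hp'm : p'.Monic := hp.map _
    have hjp : j (p.map (algebraMap D (K D))) = p' := by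
      simp only [j, coe_mapRingHom, map_map, ← halg, hp'def]
    have hpS : p' ∈ S := ⟨p.map (algebraMap D (K D)), ⟨p, 0, by rw [mul_zero, add_zero]⟩, hjp⟩
    -- constants coming from D
    have hCD : ∀ d : D, (C (algebraMap D L d) : Polynomial L) ∈ S := by
      intro d
      refine ⟨C (algebraMap D (K D) d), ⟨C d, 0, by simp⟩, ?_⟩
      simp only [j, coe_mapRingHom, map_C]
      rw [halg, RingHom.comp_apply]
    -- p' times image of K[X]
    have hpK : ∀ q : Polynomial (K D), p' * j q ∈ S := by
      intro q
      exact ⟨p.map (algebraMap D (K D)) * q, ⟨0, q, by simp⟩, by rw [map_mul, hjp]⟩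
    set C' := integralClosure S (Polynomial L) with hC'def
    -- X is integral over S
    have hX : (X : Polynomial L) ∈ C' := by
      refine aux_isIntegralElem (algebraMap S _) X
        (p'.map (C : L →+* Polynomial L) - C p') ?_ ?_ ?_
      · have h2 : (0 : WithBot ℕ) < (p'.map (C : L →+* Polynomial L)).degree := by
          refine natDegree_pos_iff_degree_pos.1 ?_
          rw [hp'm.natDegree_map, hp'def, hp.natDegree_map]
          exact hdeg
        rw [sub_eq_add_neg]
        refine (hp'm.map _).add_of_left ?_
        rw [degree_neg]
        exact lt_of_le_of_lt degree_C_le h2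
      · intro i
        have hc : C (p'.coeff i) ∈ S := by rw [hp'def, coeff_map]; exact hCD _
        have hmem : (p'.map (C : L →+* Polynomial L) - C p').coeff i ∈ S := by
          rw [coeff_sub, coeff_map, coeff_C]
          rcases eq_or_ne i 0 with h | h
          · rw [if_pos h]; exact sub_mem hc hpS
          · rw [if_neg h, sub_zero]; exact hc
        exact ⟨⟨_, hmem⟩, rfl⟩
      · rw [eval_sub, eval_map, eval₂_C_X, eval_C, sub_self]
    -- integral constants
    have hconst : ∀ c : L, IsIntegral D c → (C c : Polynomial L) ∈ C' := by
      rintro c ⟨m, hm, hme⟩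
      refine aux_isIntegralElem (algebraMap S _) _
        (m.map ((C : L →+* Polynomial L).comp (algebraMap D L))) (hm.map _) ?_ ?_
      · intro i
        rw [coeff_map, RingHom.comp_apply]
        exact ⟨⟨_, hCD _⟩, rfl⟩
      · rw [eval_map, ← hom_eval₂, hme, map_zero]
    -- p' times any constant
    have hpc : ∀ c : L, (p' * C c : Polynomial L) ∈ C' := by
      intro c
      have hcK : IsIntegral (K D) c := (Algebra.IsAlgebraic.isAlgebraic c).isIntegral
      set m := minpoly (K D) c with hmdef
      have hm : m.Monic := minpoly.monic hcK
      set ψ : (K D) →+* Polynomial L := (C : L →+* Polynomial L).comp (algebraMap (K D) L)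
        with hψdef
      have hmψ : (m.map ψ).Monic := hm.map _
      have hn : (m.map ψ).natDegree = m.natDegree := hm.natDegree_map _
      refine aux_isIntegralElem (algebraMap S _) _ ((m.map ψ).scaleRoots p')
        ((monic_scaleRoots_iff p').2 hmψ) ?_ ?_
      · intro i
        have hmem : ((m.map ψ).scaleRoots p').coeff i ∈ S := by
          rw [coeff_scaleRoots, hn, coeff_map]
          rcases lt_trichotomy i m.natDegree with hi | hi | hi
          · obtain ⟨k, hk⟩ : ∃ k, m.natDegree - i = k + 1 := ⟨m.natDegree - i - 1, by omega⟩
            have heq : ψ (m.coeff i) * p' ^ (m.natDegree - i)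
                = p' * j (C (m.coeff i) * (p.map (algebraMap D (K D))) ^ k) := by
              rw [map_mul, map_pow, hjp, hψdef, hk, pow_succ]
              simp only [j, coe_mapRingHom, map_C, RingHom.comp_apply]
              ring
            rw [heq]
            exact hpK _
          · subst hi
            rw [hm.coeff_natDegree, map_one, Nat.sub_self, pow_zero, mul_one]
            exact one_mem S
          · rw [coeff_eq_zero_of_natDegree_lt hi, map_zero, zero_mul]
            exact zero_mem S
        exact ⟨⟨_, hmem⟩, rfl⟩
      · have h0 : eval₂ (RingHom.id (Polynomial L)) (C c) (m.map ψ) = 0 := by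
          show eval (C c) (m.map ψ) = 0
          rw [eval_map, hψdef, ← hom_eval₂]
          have hme := minpoly.aeval (K D) c
          rw [aeval_def] at hme
          rw [← hmdef] at hme
          rw [hme, map_zero]
        have h2 := scaleRoots_eval₂_eq_zero (RingHom.id (Polynomial L)) (s := p') h0
        show eval₂ (RingHom.id (Polynomial L)) (p' * C c) ((m.map ψ).scaleRoots p') = 0
        simpa only [RingHom.id_apply] using h2
    -- p' times anything
    have hpg : ∀ g : Polynomial L, (p' * g : Polynomial L) ∈ C' := by
      intro g
      induction g using Polynomial.induction_on with
      | C a => exact hpc a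
      | add u v hu hv => rw [mul_add]; exact add_mem hu hv
      | monomial n a _ =>
          rw [show p' * (C a * X ^ (n+1)) = p' * C a * X ^ (n+1) by ring]
          exact C'.mul_mem (hpc a) (C'.pow_mem hX (n + 1))
    -- now the main argument
    set f' : Polynomial L := f.map (algebraMap (K D) L) with hf'def
    have hjf : j f = f' := rfl
    set R : Multiset L := p'.roots with hRdef
    have hsplit : p' = (R.map fun a => X - C a).prod := by
      rw [hRdef]
      exact (IsAlgClosed.splits p').eq_prod_roots_of_monic hp'm
    set G : Polynomial L := (R.map fun a => f' - C (f'.eval a)).prod with hGdef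
    have hdvd : p' ∣ G := by
      rw [hsplit, hGdef]
      exact Multiset.prod_dvd_prod_of_dvd _ _ fun a _ => X_sub_C_dvd_sub_C_eval
    obtain ⟨g, hG⟩ := hdvd
    have hroot : ∀ a ∈ R, IsIntegral D (f'.eval a) :=
      fun a ha => hf a ((mem_roots hp'm.ne_zero).1 ha)
    set prodM : (Polynomial L)[X] :=
      (R.map fun a => (X : (Polynomial L)[X]) - C (C (f'.eval a))).prod with hprodMdef
    have hprodMm : prodM.Monic :=
      monic_multiset_prod_of_monic _ _ fun a _ => monic_X_sub_C _
    have hcard : Multiset.card R = p.natDegree := by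
      have h1 : (p'.map (RingHom.id L)).natDegree = (p'.map (RingHom.id L)).roots.card := by
        rw [map_id]; exact (IsAlgClosed.splits p').natDegree_eq_card_roots
      rw [map_id] at h1
      rw [hRdef, ← h1, hp'def, hp.natDegree_map]
    have hprodMdeg : prodM.natDegree = Multiset.card R := by
      rw [hprodMdef, natDegree_multiset_prod_of_monic]
      · rw [Multiset.map_map]
        simp [Function.comp_def, natDegree_X_sub_C]
      · intro q hq
        obtain ⟨a, -, rfl⟩ := Multiset.mem_map.1 hq
        exact monic_X_sub_C _
    have hMm : (prodM - C G).Monic := by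
      have h2 : (0 : WithBot ℕ) < prodM.degree := by
        refine natDegree_pos_iff_degree_pos.1 ?_
        rw [hprodMdeg, hcard]
        exact hdeg
      rw [sub_eq_add_neg]
      refine hprodMm.add_of_left ?_
      rw [degree_neg]
      exact lt_of_le_of_lt degree_C_le h2
    have hprodC : ∀ i, prodM.coeff i ∈ C' := by
      have hmem : prodM ∈ lifts (algebraMap C' (Polynomial L)) := by
        refine Subsemiring.multiset_prod_mem _ _ ?_
        intro Pf hPf
        obtain ⟨a, ha, rfl⟩ := Multiset.mem_map.1 hPf
        rw [sub_eq_add_neg, ← map_neg (C : Polynomial L →+* (Polynomial L)[X])]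
        exact Subsemiring.add_mem _ (X_mem_lifts _)
          (C_mem_lifts (algebraMap C' (Polynomial L)) ⟨_, neg_mem (hconst _ (hroot a ha))⟩)
      intro i
      obtain ⟨c, hc⟩ := (lifts_iff_coeff_lifts _).1 hmem i
      rw [← hc]
      exact c.2
    have hfC' : IsIntegral C' f' := by
      refine aux_isIntegralElem (algebraMap C' _) f' (prodM - C G) hMm ?_ ?_
      · intro i
        have hGC : G ∈ C' := by rw [hG]; exact hpg g
        have hmem : (prodM - C G).coeff i ∈ C' := by
          rw [coeff_sub, coeff_C]
          rcases eq_or_ne i 0 with h | h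
          · rw [if_pos h]; exact sub_mem (hprodC i) hGC
          · rw [if_neg h, sub_zero]; exact hprodC i
        exact ⟨⟨_, hmem⟩, rfl⟩
      · rw [eval_sub, eval_C, hprodMdef, eval_multiset_prod, Multiset.map_map]
        have heval : ∀ a : L, eval f' ((X : (Polynomial L)[X]) - C (C (f'.eval a)))
            = f' - C (f'.eval a) := fun a => by rw [eval_sub, eval_X, eval_C]
        simp only [Function.comp_def, heval]
        rw [← hGdef, sub_self]
    haveI : Algebra.IsIntegral S C' := ⟨fun x => integralClosure.isIntegral x⟩
    have hfS : IsIntegral S f' := isIntegral_trans f' hfC'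
    obtain ⟨P, hPm, hPe⟩ := hfS
    -- transfer back to Dp
    have hcod : ∀ r : Dp D p, j (r : Polynomial (K D)) ∈ S := fun r => ⟨r, r.2, rfl⟩
    set g0 : Dp D p →+* S := (j.comp (algebraMap (Dp D p) (Polynomial (K D)))).codRestrict
      S.toSubsemiring (fun r => hcod r) with hg0def
    have hg0surj : ∀ s : S, ∃ r : Dp D p, g0 r = s := by
      rintro ⟨s, d, hd, rfl⟩
      exact ⟨⟨d, hd⟩, rfl⟩
    haveI : Nontrivial S := ⟨⟨0, 1, fun h => zero_ne_one (congrArg Subtype.val h)⟩⟩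
    obtain ⟨P', hP'map, -, hP'm⟩ :=
      lifts_and_degree_eq_and_monic ((lifts_iff_coeff_lifts P).2 fun i => by
        obtain ⟨r, hr⟩ := hg0surj (P.coeff i); exact ⟨r, hr⟩) hPm
    refine ⟨P', hP'm, hjinj ?_⟩
    rw [map_zero, hom_eval₂]
    have hcomp : (algebraMap S (Polynomial L)).comp g0
        = j.comp (algebraMap (Dp D p) (Polynomial (K D))) := rfl
    rw [← hcomp, ← eval₂_map, hP'map, hjf, hPe]
end

section
/- Let p ∈ D[X] be monic non-constant and K ⊆ F an algebraic field extension, with D_F the integral closure of D in F. Then D(p) = D[X] + p·K[X] ⊆ D_F(p) = D_F[X] + p·F[X] is an integral ring extension. -/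
open Polynomial

variable (D : Type*) [CommRing D] [IsDomain D]

set_option maxHeartbeats 1000000 in
/-- For `p ∈ D[X]` monic non-constant and `K ⊆ F` an algebraic field extension with `D_F` the
integral closure of `D` in `F`, the extension `D(p) ⊆ D_F(p) = D_F[X] + p·F[X]` (via the
canonical map `K[X] → F[X]`) is integral: every element of `D_F(p)` is integral over `D(p)`. -/
theorem Dp_integral_over_Dp (F : Type*) [Field F] [Algebra D F] [Algebra (K D) F]
    [IsScalarTower D (K D) F] [Algebra.IsAlgebraic (K D) F]
    (p : D[X]) (hp : p.Monic) (hdeg : 0 < p.natDegree) :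
    ∀ f : Polynomial F,
      (∃ r : Polynomial (↥(integralClosure D F)), ∃ q : Polynomial F,
        f = r.map (algebraMap (↥(integralClosure D F)) F) + p.map (algebraMap D F) * q) →
      ((Polynomial.mapRingHom (algebraMap (K D) F)).comp (Dp D p).subtype).IsIntegralElem f := by
  classical
  set φ : Polynomial (K D) →+* Polynomial F := Polynomial.mapRingHom (algebraMap (K D) F) with hφ
  set S : Dp D p →+* Polynomial F := φ.comp (Dp D p).subtype with hS
  letI : Algebra (Dp D p) (Polynomial F) := S.toAlgebra
  have halg : algebraMap (Dp D p) (Polynomial F) = S := rfl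
  -- π := p mapped to K[X], as element of Dp
  set π : Polynomial (K D) := p.map (algebraMap D (K D)) with hπ
  have hπmem : π ∈ Dp D p := ⟨p, 0, by simp [hπ]⟩
  have hφπ : φ π = p.map (algebraMap D F) := by
    show (p.map (algebraMap D (K D))).map (algebraMap (K D) F) = _
    rw [Polynomial.map_map, ← IsScalarTower.algebraMap_eq]
  -- X is integral (it is in the image of S)
  have hX : IsIntegral (Dp D p) (X : Polynomial F) := by
    have : (X : Polynomial F) = algebraMap (Dp D p) (Polynomial F)
        ⟨(X : Polynomial (K D)), ⟨X, 0, by simp⟩⟩ := by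
      rw [halg]; simp [hS, hφ]
    rw [this]
    exact isIntegral_algebraMap
  -- constants from the integral closure of D in F are integral
  have hDF : ∀ a : ↥(integralClosure D F), IsIntegral (Dp D p) (C (a : F) : Polynomial F) := by
    intro a
    obtain ⟨g, hg, hg0⟩ := a.2
    let ι : D →+* Dp D p :=
      { toFun := fun d => ⟨C (algebraMap D (K D) d), ⟨C d, 0, by simp⟩⟩
        map_one' := by ext; simp
        map_mul' := by intro x y; ext; simp
        map_zero' := by ext; simp
        map_add' := by intro x y; ext; simp }
    refine ⟨g.map ι, hg.map ι, ?_⟩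
    rw [eval₂_map, halg]
    have hcomp : S.comp ι = (C : F →+* Polynomial F).comp (algebraMap D F) := by
      ext d
      simp [hS, hφ, ι, IsScalarTower.algebraMap_apply D (K D) F]
    rw [hcomp, ← hom_eval₂, hg0, map_zero]
  -- p * (constant) is integral, via scaleRoots of the minimal polynomial
  have hπc : ∀ c : F, IsIntegral (Dp D p) (p.map (algebraMap D F) * C c) := by
    intro c
    have hc : IsIntegral (K D) c := (Algebra.IsAlgebraic.isAlgebraic c).isIntegral
    set g := minpoly (K D) c with hgdef
    have hgm : g.Monic := minpoly.monic hc
    have hn : 0 < g.natDegree := minpoly.natDegree_pos hc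
    set g' : Polynomial (Polynomial (K D)) := g.map (C : K D →+* Polynomial (K D)) with hg'
    have hg'm : g'.Monic := hgm.map _
    have hg'deg : g'.natDegree = g.natDegree := hgm.natDegree_map _
    -- the scaled polynomial has coefficients in Dp
    have hcoeff : ∀ i, (g'.scaleRoots π).coeff i ∈ Dp D p := by
      intro i
      rw [coeff_scaleRoots]
      rcases lt_or_ge i g'.natDegree with h | h
      · -- multiple of π
        obtain ⟨m, hm⟩ : ∃ m, g'.natDegree - i = m + 1 := ⟨g'.natDegree - i - 1, by omega⟩
        refine ⟨0, g'.coeff i * π ^ m, ?_⟩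
        rw [hm, pow_succ, Polynomial.map_zero]
        ring
      · rcases eq_or_lt_of_le h with h | h
        · rw [← h, Nat.sub_self, pow_zero, mul_one, ← h] at *
          have : g'.coeff g'.natDegree = 1 := hg'm.coeff_natDegree
          rw [this]
          exact (Dp D p).one_mem
        · rw [coeff_eq_zero_of_natDegree_lt h, zero_mul]
          exact (Dp D p).zero_mem
    have hsub : (↑(g'.scaleRoots π).coeffs : Set (Polynomial (K D))) ⊆ (Dp D p : Set _) := by
      intro x hx
      obtain ⟨i, _, rfl⟩ := Polynomial.mem_coeffs_iff.mp hx
      exact hcoeff i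
    refine ⟨(g'.scaleRoots π).toSubring (Dp D p) hsub, ?_, ?_⟩
    · exact (monic_toSubring _ _ _).mpr ((monic_scaleRoots_iff π).mpr hg'm)
    · rw [halg, hS, ← eval₂_map, Polynomial.map_toSubring]
      have hroot : eval₂ φ (C c) g' = 0 := by
        rw [hg', eval₂_map]
        have : φ.comp (C : K D →+* Polynomial (K D))
            = (C : F →+* Polynomial F).comp (algebraMap (K D) F) := by
          ext x
          simp [hφ]
        rw [this, ← hom_eval₂]
        rw [show eval₂ (algebraMap (K D) F) c g = 0 from by
          rw [← aeval_def]; exact minpoly.aeval _ _]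
        rw [map_zero]
      have := scaleRoots_eval₂_eq_zero φ hroot (s := π)
      rwa [hφπ] at this
  -- assemble
  rintro f ⟨r, q, rfl⟩
  show S.IsIntegralElem _
  have hr : ∀ r : Polynomial (↥(integralClosure D F)),
      IsIntegral (Dp D p) (r.map (algebraMap (↥(integralClosure D F)) F)) := by
    intro r
    induction r using Polynomial.induction_on' with
    | add a b ha hb => rw [Polynomial.map_add]; exact ha.add hb
    | monomial n a =>
      rw [Polynomial.map_monomial, ← C_mul_X_pow_eq_monomial]
      exact (hDF a).mul (hX.pow n)
  have hq : ∀ q : Polynomial F, IsIntegral (Dp D p) (p.map (algebraMap D F) * q) := by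
    intro q
    induction q using Polynomial.induction_on' with
    | add a b ha hb => rw [mul_add]; exact ha.add hb
    | monomial n c =>
      rw [← C_mul_X_pow_eq_monomial, ← mul_assoc]
      exact (hπc c).mul (hX.pow n)
  exact (hr r).add (hq q)
end

section
/- Let p ∈ D[X] be monic with factorization p = ∏_i q_i into monic polynomials over D that are pairwise coprime in K[X]. Then (⋂_i D(q_i))/(p·K[X]) ≅ ∏_i D[X]/(q_i·D[X]). Moreover, D(p) = ⋂_i D(q_i) if and only if the q_i are pairwise coprime over D (i.e., q_iD[X] + q_jD[X] = D[X] for i ≠ j). -/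
open Polynomial

variable (D : Type*) [CommRing D] [IsDomain D]

variable {D}

lemma dvd_map_iff {a b : D[X]} (ha : a.Monic) :
    a.map (algebraMap D (K D)) ∣ b.map (algebraMap D (K D)) ↔ a ∣ b :=
  Polynomial.map_dvd_map _ (IsFractionRing.injective D (K D)) ha

lemma mem_Dp_iff {g : D[X]} {f : Polynomial (K D)} :
    f ∈ Dp D g ↔ ∃ r : D[X],
      g.map (algebraMap D (K D)) ∣ (f - r.map (algebraMap D (K D))) := by
  constructor
  · rintro ⟨r, b, rfl⟩
    exact ⟨r, b, by ring⟩
  · rintro ⟨r, b, hb⟩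
    exact ⟨r, b, by linear_combination hb⟩

/-- `D[X] → K[X]/(ḡ)`. -/
noncomputable def toQuot (g : D[X]) :
    D[X] →+* (Polynomial (K D)) ⧸ Ideal.span {g.map (algebraMap D (K D))} :=
  (Ideal.Quotient.mk _).comp (Polynomial.mapRingHom (algebraMap D (K D)))

lemma ker_toQuot (g : D[X]) (hg : g.Monic) :
    RingHom.ker (toQuot (D := D) g) = Ideal.span {g} := by
  ext a
  rw [RingHom.mem_ker, toQuot, RingHom.comp_apply, coe_mapRingHom,
    Ideal.Quotient.eq_zero_iff_mem, Ideal.mem_span_singleton, Ideal.mem_span_singleton,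
    dvd_map_iff hg]

/-- `D(g) → range (toQuot g)`. -/
noncomputable def DpToRange (g : D[X]) : Dp D g →+* RingHom.range (R := D[X]) (S := (K D)[X] ⧸ Ideal.span {g.map (algebraMap D (K D))}) (toQuot (D := D) g) :=
  RingHom.codRestrict ((Ideal.Quotient.mk _).comp (Dp D g).subtype) _ (by
    rintro ⟨f, r, b, rfl⟩
    refine ⟨r, ?_⟩
    simp only [toQuot, RingHom.comp_apply, coe_mapRingHom, Subring.coe_subtype]
    rw [Ideal.Quotient.eq]
    exact Ideal.mem_span_singleton.mpr ⟨-b, by ring⟩)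

/-- The canonical map `D(g) → D[X]/(g)` for monic `g`. -/
noncomputable def PhiOne (g : D[X]) (hg : g.Monic) : Dp D g →+* D[X] ⧸ Ideal.span {g} :=
  (((Ideal.quotEquivOfEq (ker_toQuot g hg).symm).trans
      (RingHom.quotientKerEquivRange (R := D[X]) (S := (K D)[X] ⧸ Ideal.span {g.map (algebraMap D (K D))}) (toQuot (D := D) g))).symm.toRingHom).comp (DpToRange g)

lemma PhiOne_eq (g : D[X]) (hg : g.Monic) (f : Dp D g) (r : D[X]) :
    PhiOne g hg f = Ideal.Quotient.mk _ r ↔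
      g.map (algebraMap D (K D)) ∣
        ((f : Polynomial (K D)) - r.map (algebraMap D (K D))) := by
  have hE : ((Ideal.quotEquivOfEq (ker_toQuot g hg).symm).trans
      (RingHom.quotientKerEquivRange (R := D[X]) (S := (K D)[X] ⧸ Ideal.span {g.map (algebraMap D (K D))}) (toQuot (D := D) g))) (Ideal.Quotient.mk _ r)
      = ⟨toQuot (D := D) g r, r, rfl⟩ := rfl
  set E := ((Ideal.quotEquivOfEq (ker_toQuot g hg).symm).trans
      (RingHom.quotientKerEquivRange (R := D[X]) (S := (K D)[X] ⧸ Ideal.span {g.map (algebraMap D (K D))}) (toQuot (D := D) g))) with hEdef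
  rw [PhiOne, RingHom.comp_apply, RingEquiv.toRingHom_eq_coe, RingEquiv.coe_toRingHom,
    show ∀ x y, E.symm x = y ↔ x = E y from fun x y => E.toEquiv.symm_apply_eq, hE]
  rw [Subtype.ext_iff]
  show Ideal.Quotient.mk (Ideal.span {g.map (algebraMap D (K D))}) (f : Polynomial (K D)) =
      Ideal.Quotient.mk (Ideal.span {g.map (algebraMap D (K D))}) (r.map (algebraMap D (K D))) ↔ _
  rw [Ideal.Quotient.eq, Ideal.mem_span_singleton]

variable (D)

/-- Let `p = ∏ i, q i` with the `q i` monic and pairwise coprime over `K`. Then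
`(⋂ i, D(q i))/(p·K[X]) ≅ ∏ i, D[X]/(q i·D[X])`; moreover `D(p) = ⋂ i, D(q i)` iff the
`q i` are pairwise coprime over `D`. -/
theorem iInf_Dp_quotient_iso {ι : Type*} [Fintype ι] (q : ι → D[X])
    (hq : ∀ i, (q i).Monic)
    (hco : ∀ i j, i ≠ j →
      IsCoprime ((q i).map (algebraMap D (K D))) ((q j).map (algebraMap D (K D))))
    (p : D[X]) (hp : p = ∏ i, q i) :
    Nonempty ((↥(⨅ i, Dp D (q i)) ⧸
        (Ideal.span {p.map (algebraMap D (K D))}).comap (⨅ i, Dp D (q i)).subtype) ≃+*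
      ∀ i, D[X] ⧸ Ideal.span {q i}) ∧
    (Dp D p = ⨅ i, Dp D (q i) ↔ ∀ i j, i ≠ j → IsCoprime (q i) (q j)) := by
  classical
  set φ := algebraMap D (K D) with hφ
  have hcoI : Pairwise (Function.onFun IsCoprime fun i => Ideal.span {(q i).map φ}) :=
    fun i j hij => (Ideal.isCoprime_span_singleton_iff _ _).mpr (hco i j hij)
  have hdvdp : ∀ i, (q i).map φ ∣ p.map φ := fun i =>
    Polynomial.map_dvd _ (hp ▸ Finset.dvd_prod_of_mem q (Finset.mem_univ i))
  have hproddvd : ∀ f : Polynomial (K D), (∀ i, (q i).map φ ∣ f) → p.map φ ∣ f := by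
    intro f hf
    have h1 : p.map φ = ∏ i, (q i).map φ := by rw [hp, Polynomial.map_prod]
    rw [h1]
    exact Finset.prod_dvd_of_coprime (fun i _ j _ hij => hco i j hij) (fun i _ => hf i)
  set Φ : (↥(⨅ i, Dp D (q i))) →+* ∀ i, D[X] ⧸ Ideal.span {q i} :=
    Pi.ringHom fun i => (PhiOne (q i) (hq i)).comp
      (Subring.inclusion (iInf_le (fun i => Dp D (q i)) i)) with hΦ
  have key : ∀ (f : ↥(⨅ i, Dp D (q i))) (i : ι) (r : D[X]),
      Φ f i = Ideal.Quotient.mk _ r ↔ (q i).map φ ∣ ((f : Polynomial (K D)) - r.map φ) := by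
    intro f i r
    exact PhiOne_eq (q i) (hq i) _ r
  have hsurj : Function.Surjective Φ := by
    intro y
    choose r hr using fun i => Ideal.Quotient.mk_surjective (y i)
    obtain ⟨f, hf⟩ := Ideal.exists_forall_sub_mem_ideal hcoI (fun i => (r i).map φ)
    have hfmem : f ∈ ⨅ i, Dp D (q i) := by
      rw [Subring.mem_iInf]
      intro i
      exact mem_Dp_iff.mpr ⟨r i, Ideal.mem_span_singleton.mp (hf i)⟩
    refine ⟨⟨f, hfmem⟩, ?_⟩
    funext i
    rw [← hr i]
    exact (key ⟨f, hfmem⟩ i (r i)).mpr (Ideal.mem_span_singleton.mp (hf i))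
  have hker : RingHom.ker Φ = (Ideal.span {p.map φ}).comap (⨅ i, Dp D (q i)).subtype := by
    ext f
    rw [RingHom.mem_ker, Ideal.mem_comap, Ideal.mem_span_singleton]
    constructor
    · intro h0
      apply hproddvd
      intro i
      have h1 : Φ f i = Ideal.Quotient.mk _ (0 : D[X]) := by rw [h0]; simp
      simpa using (key f i 0).mp h1
    · intro hdvd
      funext i
      have h1 : (q i).map φ ∣ ((f : Polynomial (K D)) - (0 : D[X]).map φ) := by
        simpa using (hdvdp i).trans hdvd
      have := (key f i 0).mpr h1
      simpa using this
  refine ⟨⟨(Ideal.quotEquivOfEq hker.symm).trans (RingHom.quotientKerEquivOfSurjective hsurj)⟩, ?_⟩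
  have hle : Dp D p ≤ ⨅ i, Dp D (q i) := by
    refine le_iInf fun i => ?_
    rintro f ⟨r, b, rfl⟩
    obtain ⟨c, hc⟩ := hdvdp i
    exact ⟨r, c * b, by rw [hc]; ring⟩
  constructor
  · intro heq i j hij
    obtain ⟨f, hf⟩ := Ideal.exists_forall_sub_mem_ideal hcoI
      (fun k => ((if k = i then 1 else 0 : D[X])).map φ)
    have hfmem : f ∈ Dp D p := by
      rw [heq, Subring.mem_iInf]
      intro k
      exact mem_Dp_iff.mpr ⟨if k = i then 1 else 0, Ideal.mem_span_singleton.mp (hf k)⟩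
    obtain ⟨a, haf⟩ := mem_Dp_iff.mp hfmem
    have hqi : (q i).map φ ∣ (a.map φ - (1 : D[X]).map φ) := by
      have h1 : (q i).map φ ∣ (f - (1 : D[X]).map φ) := by
        simpa using Ideal.mem_span_singleton.mp (hf i)
      have h2 : (q i).map φ ∣ (f - a.map φ) := (hdvdp i).trans haf
      have h3 : a.map φ - (1 : D[X]).map φ = (f - (1 : D[X]).map φ) - (f - a.map φ) := by ring
      rw [h3]; exact dvd_sub h1 h2
    have hqj : (q j).map φ ∣ (a.map φ - (0 : D[X]).map φ) := by
      have h1 : (q j).map φ ∣ (f - (0 : D[X]).map φ) := by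
        simpa [hij.symm] using Ideal.mem_span_singleton.mp (hf j)
      have h2 : (q j).map φ ∣ (f - a.map φ) := (hdvdp j).trans haf
      have h3 : a.map φ - (0 : D[X]).map φ = (f - (0 : D[X]).map φ) - (f - a.map φ) := by ring
      rw [h3]; exact dvd_sub h1 h2
    rw [← Polynomial.map_sub, dvd_map_iff (hq i)] at hqi
    rw [← Polynomial.map_sub, dvd_map_iff (hq j)] at hqj
    obtain ⟨u, hu⟩ := hqi
    obtain ⟨v, hv⟩ := hqj
    refine ⟨-u, v, ?_⟩
    have hu' : a - 1 = q i * u := hu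
    have hv' : a - 0 = q j * v := hv
    linear_combination hu' - hv'
  · intro hcoD
    refine le_antisymm hle (fun f hf => ?_)
    have hmem : ∀ i, ∃ r : D[X], (q i).map φ ∣ f - r.map φ :=
      fun i => mem_Dp_iff.mp (Subring.mem_iInf.mp hf i)
    choose r hr using hmem
    obtain ⟨a, ha⟩ := Ideal.exists_forall_sub_mem_ideal
      (I := fun i => Ideal.span {q i})
      (fun i j hij => (Ideal.isCoprime_span_singleton_iff _ _).mpr (hcoD i j hij)) r
    refine mem_Dp_iff.mpr ⟨a, hproddvd _ fun i => ?_⟩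
    have h1 : q i ∣ a - r i := Ideal.mem_span_singleton.mp (ha i)
    have h2 : (q i).map φ ∣ (a - r i).map φ := (dvd_map_iff (hq i)).mpr h1
    rw [Polynomial.map_sub] at h2
    have h3 : f - a.map φ = (f - (r i).map φ) - (a.map φ - (r i).map φ) := by ring
    rw [h3]
    exact dvd_sub (hr i) h2
end

section
/- Let p ∈ D[X] be monic non-constant and square-free, p = ∏_{i=1}^k p_i with p_i monic, distinct, irreducible over D. Then Int_K(Ω_p, D̄)/(p(X)·K[X]) ≅ ∏_{i=1}^k D_{K_i}, where K_i = K[X]/(p_i(X)) and D_{K_i} is the integral closure of D in K_i. -/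
open Polynomial

set_option maxHeartbeats 1000000

variable (D : Type*) [CommRing D] [IsDomain D]

/-- The ring `Int_K(Ω, D̄) = {f ∈ K[X] : f(Ω) ⊆ D̄}` of polynomials that are integral-valued on
a set `Ω` of elements of an extension `L` of `K`, as a subring of `K[X]`. -/
noncomputable def IntInt (L : Type*) [Field L] [Algebra D L] [Algebra (K D) L]
    [IsScalarTower D (K D) L] (Ω : Set L) : Subring (Polynomial (K D)) where
  carrier := {f | ∀ x ∈ Ω, IsIntegral D ((f.map (algebraMap (K D) L)).eval x)}
  zero_mem' := by intro x _; simpa using isIntegral_zero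
  one_mem' := by intro x _; simpa using isIntegral_one
  add_mem' := by
    intro f g hf hg x hx
    simpa [Polynomial.map_add] using (hf x hx).add (hg x hx)
  mul_mem' := by
    intro f g hf hg x hx
    simpa [Polynomial.map_mul] using (hf x hx).mul (hg x hx)
  neg_mem' := by
    intro f hf x hx
    simpa [Polynomial.map_neg] using (hf x hx).neg

/-- For `p = ∏ i, q i` square-free with the `q i` monic, distinct and irreducible over the
integrally closed domain `D`, the quotient of `Int_K(Ω_p, D̄)` by the ideal `p·K[X]` is
isomorphic to `∏ i, D_{K_i}`, where `K_i = K[X]/(q_i)` and `D_{K_i}` is the integral closure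
of `D` in `K_i`. -/
theorem intInt_quotient_iso [IsIntegrallyClosed D]
    (L : Type*) [Field L] [Algebra D L] [Algebra (K D) L] [IsScalarTower D (K D) L]
    [IsAlgClosed L] [Algebra.IsAlgebraic (K D) L]
    {ι : Type*} [Fintype ι] (q : ι → D[X]) (hq : ∀ i, (q i).Monic)
    (hirr : ∀ i, Irreducible (q i)) (hinj : Function.Injective q)
    (p : D[X]) (hp : p = ∏ i, q i) (hdeg : 0 < p.natDegree) :
    Nonempty ((↥(IntInt D L {x : L | (p.map (algebraMap D L)).eval x = 0}) ⧸
        (Ideal.span {p.map (algebraMap D (K D))}).comap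
          (IntInt D L {x : L | (p.map (algebraMap D L)).eval x = 0}).subtype) ≃+*
      ∀ i, ↥(integralClosure D
        (Polynomial (K D) ⧸ Ideal.span {(q i).map (algebraMap D (K D))}))) := by
  classical
  have hDK : Function.Injective (algebraMap D (K D)) := IsFractionRing.injective D (K D)
  set qK : ι → (K D)[X] := fun i => (q i).map (algebraMap D (K D)) with hqKdef
  have hqKmonic : ∀ i, (qK i).Monic := fun i => (hq i).map _
  have hirrK : ∀ i, Irreducible (qK i) := fun i =>
    ((hq i).irreducible_iff_irreducible_map_fraction_map).1 (hirr i)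
  have hcop : ∀ i j, i ≠ j → IsCoprime (qK i) (qK j) := by
    intro i j hij
    rw [(hirrK i).coprime_iff_not_dvd]
    intro hdvd
    have hassoc := (hirrK i).associated_of_dvd (hirrK j) hdvd
    have : q i = q j := by
      have := eq_of_monic_of_associated (hqKmonic i) (hqKmonic j) hassoc
      exact Polynomial.map_injective _ hDK this
    exact hij (hinj this)
  set pK : (K D)[X] := p.map (algebraMap D (K D)) with hpKdef
  have hpKprod : pK = ∏ i, qK i := by
    rw [hpKdef, hp, Polynomial.map_prod]
  set Ii : ι → Ideal (K D)[X] := fun i => Ideal.span {qK i} with hIidef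
  set Ω : Set L := {x : L | (p.map (algebraMap D L)).eval x = 0} with hΩdef
  set A := IntInt D L Ω with hAdef
  -- map from D[X] through K D to L
  have hmapmap : ∀ (r : D[X]), r.map (algebraMap D L)
      = (r.map (algebraMap D (K D))).map (algebraMap (K D) L) := by
    intro r
    rw [Polynomial.map_map, ← IsScalarTower.algebraMap_eq]
  -- key lemma: lifting along a root
  have key : ∀ (i : ι) (x : L), ((qK i).map (algebraMap (K D) L)).eval x = 0 →
      ∀ f : (K D)[X],
        IsIntegral D (Ideal.Quotient.mk (Ii i) f) ↔
          IsIntegral D ((f.map (algebraMap (K D) L)).eval x) := by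
    intro i x hx f
    haveI : (Ii i).IsMaximal := PrincipalIdealRing.isMaximal_of_irreducible (hirrK i)
    have hker : ∀ a ∈ Ii i, (aeval x : (K D)[X] →ₐ[K D] L) a = 0 := by
      intro a ha
      rw [hIidef] at ha
      obtain ⟨c, rfl⟩ := Ideal.mem_span_singleton.mp ha
      rw [map_mul]
      have : (aeval x : (K D)[X] →ₐ[K D] L) (qK i) = 0 := by
        rw [aeval_def, eval₂_eq_eval_map, hx]
      rw [this, zero_mul]
    set σK : ((K D)[X] ⧸ Ii i) →ₐ[K D] L :=
      Ideal.Quotient.liftₐ (Ii i) (aeval x) hker with hσKdef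
    set σ : ((K D)[X] ⧸ Ii i) →ₐ[D] L := σK.restrictScalars D with hσdef
    have hkerF : ∀ a : (K D)[X], a ∈ Ii i →
        (((aeval x : (K D)[X] →ₐ[K D] L) : (K D)[X] →+* L)) a = 0 := hker
    have hkerle : RingHom.ker ((aeval x : (K D)[X] →ₐ[K D] L) : (K D)[X] →+* L) ≤ Ii i := by
      have hle : Ii i ≤ RingHom.ker ((aeval x : (K D)[X] →ₐ[K D] L) : (K D)[X] →+* L) :=
        fun a ha => RingHom.mem_ker.mpr (hker a ha)
      have hne : RingHom.ker ((aeval x : (K D)[X] →ₐ[K D] L) : (K D)[X] →+* L) ≠ ⊤ := by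
        intro h
        have : (aeval x : (K D)[X] →ₐ[K D] L) 1 = 0 := by
          have := h ▸ Submodule.mem_top (x := (1 : (K D)[X]))
          exact RingHom.mem_ker.mp this
        simp at this
      exact le_of_eq ((‹(Ii i).IsMaximal›.eq_of_le hne hle).symm)
    have hinjσ : Function.Injective σ := by
      have h1 := RingHom.lift_injective_of_ker_le_ideal (Ii i)
        (f := ((aeval x : (K D)[X] →ₐ[K D] L) : (K D)[X] →+* L)) hkerF hkerle
      have h2 : ⇑σ = ⇑(Ideal.Quotient.lift (Ii i)
          ((aeval x : (K D)[X] →ₐ[K D] L) : (K D)[X] →+* L) hkerF) := rfl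
      rw [h2]; exact h1
    have hval : σ (Ideal.Quotient.mk (Ii i) f) = (f.map (algebraMap (K D) L)).eval x := by
      show σK (Ideal.Quotient.mk (Ii i) f) = _
      rw [hσKdef]
      rw [Ideal.Quotient.liftₐ_apply]
      show ((aeval x : (K D)[X] →ₐ[K D] L) : (K D)[X] →+* L) f = _
      rw [AlgHom.coe_toRingHom, aeval_def, eval₂_eq_eval_map]
    rw [← hval]
    exact (isIntegral_algHom_iff σ hinjσ).symm
  -- each qK i has a root in L, lying in Ω
  have hroot : ∀ i, ∃ x : L, ((qK i).map (algebraMap (K D) L)).eval x = 0 ∧ x ∈ Ω := by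
    intro i
    have hdeg' : ((qK i).map (algebraMap (K D) L)).degree ≠ 0 := by
      rw [Polynomial.degree_map]
      exact ne_of_gt (Polynomial.degree_pos_of_irreducible (hirrK i))
    obtain ⟨x, hx⟩ := IsAlgClosed.exists_root _ hdeg'
    refine ⟨x, hx, ?_⟩
    have hdvd : qK i ∣ pK := hpKprod ▸ Finset.dvd_prod_of_mem _ (Finset.mem_univ i)
    obtain ⟨c, hc⟩ := Polynomial.map_dvd (algebraMap (K D) L) hdvd
    show (p.map (algebraMap D L)).eval x = 0
    rw [hmapmap p, hc, eval_mul, hx, zero_mul]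
  -- membership characterization
  have memInt : ∀ f : (K D)[X], f ∈ A ↔ ∀ i, IsIntegral D (Ideal.Quotient.mk (Ii i) f) := by
    intro f
    constructor
    · intro hf i
      obtain ⟨x, hx, hxΩ⟩ := hroot i
      exact (key i x hx f).mpr (hf x hxΩ)
    · intro hf x hxΩ
      have hx0 : ∃ i, ((qK i).map (algebraMap (K D) L)).eval x = 0 := by
        have hz : (p.map (algebraMap D L)).eval x = 0 := hxΩ
        rw [hmapmap p, ← hpKdef, hpKprod, Polynomial.map_prod, eval_prod] at hz
        obtain ⟨i, _, hi⟩ := Finset.prod_eq_zero_iff.mp hz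
        exact ⟨i, hi⟩
      obtain ⟨i, hx⟩ := hx0
      exact (key i x hx f).mp (hf i)
  have hmem : ∀ f : A, ∀ i, (Ideal.Quotient.mk (Ii i) (f : (K D)[X])) ∈
      integralClosure D ((K D)[X] ⧸ Ii i) := fun f i => (memInt f.1).mp f.2 i
  set Ψ : A →+* ∀ i, integralClosure D ((K D)[X] ⧸ Ii i) :=
    { toFun := fun f i => ⟨Ideal.Quotient.mk (Ii i) f.1, hmem f i⟩,
      map_one' := by funext i; exact Subtype.ext (by simp),
      map_mul' := fun f g => by funext i; exact Subtype.ext (by simp),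
      map_zero' := by funext i; exact Subtype.ext (by simp),
      map_add' := fun f g => by funext i; exact Subtype.ext (by simp) } with hΨdef
  have hΨapp : ∀ (f : A) (i : ι),
      ((Ψ f i : (K D)[X] ⧸ Ii i)) = Ideal.Quotient.mk (Ii i) f.1 := fun f i => rfl
  have hcopI : Pairwise (Function.onFun IsCoprime Ii) :=
    fun i j hij => (Ideal.isCoprime_span_singleton_iff _ _).mpr (hcop i j hij)
  have hsurj : Function.Surjective Ψ := by
    intro g
    obtain ⟨y, hy⟩ := Ideal.quotientInfToPiQuotient_surj hcopI
      (fun i => (g i : (K D)[X] ⧸ Ii i))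
    obtain ⟨f, rfl⟩ := Ideal.Quotient.mk_surjective y
    have hcomp : ∀ i, Ideal.Quotient.mk (Ii i) f = (g i : (K D)[X] ⧸ Ii i) := by
      intro i
      have := congrFun hy i
      rwa [Ideal.quotientInfToPiQuotient_mk'] at this
    have hfA : f ∈ A := (memInt f).mpr (fun i => by rw [hcomp i]; exact (g i).2)
    refine ⟨⟨f, hfA⟩, ?_⟩
    funext i
    exact Subtype.ext ((hΨapp ⟨f, hfA⟩ i).trans (hcomp i))
  have hkerΨ : (Ideal.span {pK}).comap A.subtype = RingHom.ker Ψ := by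
    ext f
    rw [Ideal.mem_comap, RingHom.mem_ker, Ideal.mem_span_singleton]
    have h1 : (Ψ f = 0) ↔ ∀ i, qK i ∣ (f : (K D)[X]) := by
      rw [funext_iff]
      apply forall_congr'
      intro i
      rw [Pi.zero_apply, Subtype.ext_iff, hΨapp f i, ZeroMemClass.coe_zero,
        Ideal.Quotient.eq_zero_iff_mem]
      exact Ideal.mem_span_singleton
    rw [h1]
    constructor
    · intro hf i
      exact dvd_trans (hpKprod ▸ Finset.dvd_prod_of_mem _ (Finset.mem_univ i)) hf
    · intro hf
      rw [hpKprod]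
      exact Finset.prod_dvd_of_coprime
        (fun i _ j _ hij => hcop i j hij) (fun i _ => hf i)
  exact ⟨(Ideal.quotEquivOfEq hkerΨ).trans (RingHom.quotientKerEquivOfSurjective hsurj)⟩
end
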